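/- Let n ≥ 2 and 1 ≤ s ≤ n/2 be integers and K a field. If δ : M_n(K) → M_n(K) satisfies δ(xy) = δ(x)y + xδ(y) for all x, y of rank exactly s, then δ(xy) = δ(x)y + xδ(y) holds for all x, y ∈ M_n(K) with rank(x) ≤ s, rank(y) ≤ s, and min(rank(x), rank(y)) ≤ 1. -/

import Mathlib

open Matrix
open Module Submodule LinearMap

set_option synthInstance.maxHeartbeats 1000000
set_option maxHeartbeats 2000000

section Helpers
variable {K : Type*} [Field K] {n : ℕ}

private lemma P5rank_def (A : Matrix (Fin n) (Fin n) K) :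
    A.rank = finrank K (LinearMap.range A.mulVecLin) := rfl

private lemma P5toMatrix'_mulVecLin (A : Matrix (Fin n) (Fin n) K) :
    LinearMap.toMatrix' A.mulVecLin = A := by
  ext i j
  simp [LinearMap.toMatrix'_apply, Matrix.mulVecLin_apply, Matrix.mulVec, dotProduct,
    mul_ite, mul_one, mul_zero, Finset.sum_ite_eq', Pi.single_apply]

private lemma P5mulVecLin_toMatrix' (f : (Fin n → K) →ₗ[K] (Fin n → K)) :
    (LinearMap.toMatrix' f).mulVecLin = f := by
  apply LinearMap.toMatrix'.injective
  rw [P5toMatrix'_mulVecLin]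

private lemma P5rank_toMatrix' (f : (Fin n → K) →ₗ[K] (Fin n → K)) :
    (LinearMap.toMatrix' f).rank = finrank K (LinearMap.range f) := by
  rw [P5rank_def, P5mulVecLin_toMatrix']

private lemma P5matrix_eq_zero (A : Matrix (Fin n) (Fin n) K)
    (h : A.mulVecLin = 0) : A = 0 := by
  rw [← P5toMatrix'_mulVecLin A, h]
  simp

private lemma P5rank_zero_iff (A : Matrix (Fin n) (Fin n) K) :
    A.rank = 0 ↔ A = 0 := by
  constructor
  · intro h
    rw [P5rank_def] at h
    have hb : LinearMap.range A.mulVecLin = ⊥ := Submodule.finrank_eq_zero.mp h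
    exact P5matrix_eq_zero A (LinearMap.range_eq_bot.mp hb)
  · rintro rfl; exact Matrix.rank_zero

private lemma P5exists_le_finrank (U : Submodule K (Fin n → K)) (k : ℕ)
    (hk : k ≤ finrank K U) : ∃ W : Submodule K (Fin n → K), W ≤ U ∧ finrank K W = k := by
  let b := Module.finBasis K U
  let f : Fin k → (Fin n → K) := fun i => (b (Fin.castLE (by simpa using hk) i) : Fin n → K)
  have hli : LinearIndependent K f := by
    have h1 : LinearIndependent K (fun i : Fin k => b (Fin.castLE (by simpa using hk) i)) :=
      b.linearIndependent.comp _ (Fin.castLE_injective _)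
    exact h1.map' U.subtype (Submodule.ker_subtype U)
  refine ⟨Submodule.span K (Set.range f), ?_, ?_⟩
  · rw [Submodule.span_le]; rintro _ ⟨i, rfl⟩; exact (b _).2
  · rw [finrank_span_eq_card hli, Fintype.card_fin]

private lemma P5exists_compl_within (C D : Submodule K (Fin n → K)) (hDC : D ≤ C) :
    ∃ E : Submodule K (Fin n → K), E ≤ C ∧ Disjoint E D ∧ E ⊔ D = C ∧
      finrank K D + finrank K E = finrank K C := by
  classical
  let D' : Submodule K C := D.comap C.subtype
  obtain ⟨E', hE'⟩ := Submodule.exists_isCompl D'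
  refine ⟨E'.map C.subtype, Submodule.map_subtype_le _ _, ?_, ?_, ?_⟩
  · rw [disjoint_def]
    intro v hvE hvD
    obtain ⟨w', hw', rfl⟩ := hvE
    have h1 : w' ∈ D' := by simpa [D', Submodule.mem_comap] using hvD
    have h2 : w' ∈ D' ⊓ E' := Submodule.mem_inf.mpr ⟨h1, hw'⟩
    rw [disjoint_iff.mp hE'.disjoint] at h2
    simpa using congrArg (C.subtype) ((Submodule.mem_bot _).mp h2)
  · have hmap : D'.map C.subtype = D := by
      rw [Submodule.map_comap_subtype, inf_eq_right.mpr hDC]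
    rw [← hmap, ← Submodule.map_sup, sup_comm, hE'.sup_eq_top, Submodule.map_top,
      Submodule.range_subtype]
  · rw [Submodule.finrank_map_subtype_eq]
    have h2 : finrank K D' + finrank K E' = finrank K C :=
      Submodule.finrank_add_eq_of_isCompl hE'
    have h3 : finrank K D' = finrank K D :=
      (Submodule.comapSubtypeEquivOfLe hDC).finrank_eq
    omega

private lemma P5exists_disjoint_le (C D : Submodule K (Fin n → K)) (hDC : D ≤ C) (k : ℕ)
    (hk : k + finrank K D ≤ finrank K C) :
    ∃ W : Submodule K (Fin n → K), W ≤ C ∧ Disjoint W D ∧ finrank K W = k := by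
  obtain ⟨E, hEC, hdisj, _, hdim⟩ := P5exists_compl_within C D hDC
  obtain ⟨W, hWE, hWdim⟩ := P5exists_le_finrank E k (by omega)
  exact ⟨W, hWE.trans hEC, Disjoint.mono_left hWE hdisj, hWdim⟩

private lemma P5finrank_sup_of_disjoint {A B : Submodule K (Fin n → K)} (h : Disjoint A B) :
    finrank K ↥(A ⊔ B) = finrank K A + finrank K B := by
  have h1 := Submodule.finrank_sup_add_finrank_inf_eq A B
  rw [disjoint_iff.mp h] at h1
  simp only [finrank_bot] at h1
  omega

private lemma P5finrank_map_add (f : (Fin n → K) →ₗ[K] (Fin n → K)) (B : Submodule K (Fin n → K)) :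
    finrank K (B.map f) + finrank K ↥(B ⊓ LinearMap.ker f) = finrank K B := by
  have h := LinearMap.finrank_range_add_finrank_ker (f ∘ₗ B.subtype)
  rw [LinearMap.range_comp, Submodule.range_subtype, LinearMap.ker_comp] at h
  have h2 : finrank K ↥(B ⊓ LinearMap.ker f) = finrank K (Submodule.comap B.subtype (LinearMap.ker f)) := by
    rw [← Submodule.map_comap_subtype, Submodule.finrank_map_subtype_eq]
  rw [← h2] at h
  have h3 : finrank K ↥B = finrank K B := rfl
  omega

end Helpers
section Projections
variable {K : Type*} [Field K] {n : ℕ}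

private noncomputable def P5pE (P Q : Submodule K (Fin n → K)) (h : IsCompl P Q) :
    (Fin n → K) →ₗ[K] (Fin n → K) :=
  P.subtype ∘ₗ Submodule.projectionOnto P Q h

private lemma P5pE_left {P Q : Submodule K (Fin n → K)} (h : IsCompl P Q) {v : Fin n → K}
    (hv : v ∈ P) : P5pE P Q h v = v := by
  simp only [P5pE, LinearMap.comp_apply]
  rw [show v = ((⟨v, hv⟩ : P) : Fin n → K) from rfl, Submodule.projectionOnto_apply_left]
  rfl

private lemma P5pE_right {P Q : Submodule K (Fin n → K)} (h : IsCompl P Q) {v : Fin n → K}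
    (hv : v ∈ Q) : P5pE P Q h v = 0 := by
  simp only [P5pE, LinearMap.comp_apply]
  rw [Submodule.projectionOnto_apply_of_mem_right h hv]
  simp

private lemma P5pE_mem {P Q : Submodule K (Fin n → K)} (h : IsCompl P Q) (v : Fin n → K) :
    P5pE P Q h v ∈ P := (Submodule.linearProjOfIsCompl P Q h v).2

private lemma P5pE_sub_mem {P Q : Submodule K (Fin n → K)} (h : IsCompl P Q) (v : Fin n → K) :
    v - P5pE P Q h v ∈ Q := by
  have hv : v ∈ P ⊔ Q := by rw [h.sup_eq_top]; trivial
  obtain ⟨a, ha, b, hb, rfl⟩ := Submodule.mem_sup.mp hv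
  have : P5pE P Q h (a + b) = a := by
    rw [map_add, P5pE_left h ha, P5pE_right h hb, add_zero]
  rw [this]
  simpa using hb

private lemma P5pE_range {P Q : Submodule K (Fin n → K)} (h : IsCompl P Q) :
    LinearMap.range (P5pE P Q h) = P := by
  apply le_antisymm
  · rintro _ ⟨v, rfl⟩; exact P5pE_mem h v
  · intro v hv
    exact ⟨v, P5pE_left h hv⟩

private lemma P5pE_ker {P Q : Submodule K (Fin n → K)} (h : IsCompl P Q) :
    LinearMap.ker (P5pE P Q h) = Q := by
  ext v
  simp only [LinearMap.mem_ker, P5pE, LinearMap.comp_apply]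
  rw [Submodule.subtype_apply, show (0 : Fin n → K) = ((0 : P) : Fin n → K) from rfl,
    Subtype.coe_inj]
  exact Submodule.linearProjOfIsCompl_apply_eq_zero_iff h

private lemma P5pE_idem {P Q : Submodule K (Fin n → K)} (h : IsCompl P Q) (v : Fin n → K) :
    P5pE P Q h (P5pE P Q h v) = P5pE P Q h v := P5pE_left h (P5pE_mem h v)

/-- Main workhorse: a map vanishing on `S'` with range exactly `T`. -/
private lemma P5helperA (S S' T : Submodule K (Fin n → K)) (h : IsCompl S S')
    (hT : finrank K T ≤ finrank K S) :
    ∃ g : (Fin n → K) →ₗ[K] (Fin n → K),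
      LinearMap.range g = T ∧ ∀ v ∈ S', g v = 0 := by
  classical
  let bS := Module.finBasis K S
  let bT := Module.finBasis K T
  let f : Fin (finrank K S) → (Fin n → K) := fun i =>
    if hi : (i : ℕ) < finrank K T then (bT ⟨i, hi⟩ : Fin n → K) else 0
  let θ : S →ₗ[K] (Fin n → K) := bS.constr K f
  refine ⟨θ ∘ₗ Submodule.projectionOnto S S' h, ?_, ?_⟩
  · rw [LinearMap.range_comp, Submodule.range_projectionOnto, Submodule.map_top]
    rw [Basis.constr_range]
    apply le_antisymm
    · rw [Submodule.span_le]
      rintro _ ⟨i, rfl⟩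
      by_cases hi : (i : ℕ) < finrank K T
      · simp only [f, dif_pos hi]; exact (bT _).2
      · simp only [f, dif_neg hi]; exact T.zero_mem
    · have hTspan : T = Submodule.span K (Set.range (T.subtype ∘ bT)) := by
        rw [Set.range_comp, ← Submodule.map_span, Basis.span_eq, Submodule.map_top,
          Submodule.range_subtype]
      rw [hTspan]
      apply Submodule.span_mono
      rintro _ ⟨j, rfl⟩
      refine ⟨Fin.castLE hT j, ?_⟩
      have hj : ((Fin.castLE hT j : Fin (finrank K S)) : ℕ) < finrank K T := j.2
      simp only [f, dif_pos hj]
      congr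
  · intro v hv
    simp only [LinearMap.comp_apply]
    rw [Submodule.projectionOnto_apply_of_mem_right h hv, map_zero]

end Projections
section Fact
variable {K : Type*} [Field K] {n : ℕ}

private lemma P5factKer (s : ℕ) (hsn : 2*s ≤ n) (x : Matrix (Fin n) (Fin n) K)
    (hxr : x.rank ≤ s) (Kd : Submodule K (Fin n → K)) (hK : Kd ≤ LinearMap.ker x.mulVecLin)
    (hdim : finrank K Kd + s = n) :
    ∃ c d : Matrix (Fin n) (Fin n) K, c.rank = s ∧ d.rank = s ∧ c * d = x ∧
      LinearMap.ker d.mulVecLin = Kd := by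
  classical
  have hfin : finrank K (Fin n → K) = n := Module.finrank_fin_fun K
  obtain ⟨P, hPc⟩ := Submodule.exists_isCompl Kd
  have hPdim : finrank K P = s := by
    have h1 := Submodule.finrank_add_eq_of_isCompl hPc
    rw [hfin] at h1; omega
  obtain ⟨Q', -, hQdisj, hQdim⟩ := P5exists_disjoint_le (⊤ : Submodule K (Fin n → K))
    (LinearMap.range x.mulVecLin) le_top (s - x.rank)
    (by rw [finrank_top, hfin, ← P5rank_def]; omega)
  obtain ⟨g, hgrange, hgzero⟩ := P5helperA Kd P Q' hPc (by rw [hQdim]; omega)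
  set dL := P5pE P Kd hPc.symm with hdL
  set cL := x.mulVecLin ∘ₗ dL + g with hcL
  have hgP : ∀ v, g (dL v) = 0 := fun v => hgzero _ (P5pE_mem hPc.symm v)
  have hxdL : ∀ v, x.mulVecLin (dL v) = x.mulVecLin v := by
    intro v
    have h1 : x.mulVecLin (v - dL v) = 0 := hK (P5pE_sub_mem hPc.symm v)
    rw [map_sub, sub_eq_zero] at h1
    exact h1.symm
  have hcomp : cL ∘ₗ dL = x.mulVecLin := by
    apply LinearMap.ext; intro v
    have h0 : (cL ∘ₗ dL) v = x.mulVecLin (dL (dL v)) + g (dL v) := rfl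
    rw [h0, show dL (dL v) = dL v from P5pE_idem hPc.symm v, hgP v, add_zero, hxdL]
  have hrange : LinearMap.range cL = LinearMap.range x.mulVecLin ⊔ Q' := by
    apply le_antisymm
    · rintro _ ⟨v, rfl⟩
      exact Submodule.add_mem_sup ⟨dL v, rfl⟩ (hgrange ▸ ⟨v, rfl⟩)
    · apply sup_le
      · rintro _ ⟨v, rfl⟩
        exact ⟨dL v, by simpa using LinearMap.congr_fun hcomp v⟩
      · rw [← hgrange]
        rintro _ ⟨v, rfl⟩
        refine ⟨v - dL v, ?_⟩
        have h2 : dL (v - dL v) = 0 := P5pE_right hPc.symm (P5pE_sub_mem hPc.symm v)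
        have h0 : cL (v - dL v) = x.mulVecLin (dL (v - dL v)) + g (v - dL v) := rfl
        rw [h0, h2, map_zero, map_sub, hgP, sub_zero, zero_add]
  have hcrank : finrank K (LinearMap.range cL) = s := by
    rw [hrange, P5finrank_sup_of_disjoint hQdisj.symm, ← P5rank_def]
    omega
  refine ⟨LinearMap.toMatrix' cL, LinearMap.toMatrix' dL, ?_, ?_, ?_, ?_⟩
  · rw [P5rank_toMatrix', hcrank]
  · rw [P5rank_toMatrix']
    rw [show LinearMap.range dL = P from P5pE_range hPc.symm, hPdim]
  · rw [← LinearMap.toMatrix'_comp, hcomp, P5toMatrix'_mulVecLin]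
  · rw [P5mulVecLin_toMatrix']
    exact P5pE_ker hPc.symm

private lemma P5factIm (s : ℕ) (hsn : 2*s ≤ n) (y : Matrix (Fin n) (Fin n) K)
    (hyr : y.rank ≤ s) (W : Submodule K (Fin n → K))
    (hWdisj : Disjoint W (LinearMap.range y.mulVecLin))
    (hWdim : finrank K W + y.rank = s) :
    ∃ c d : Matrix (Fin n) (Fin n) K, c.rank = s ∧ d.rank = s ∧ c * d = y ∧
      LinearMap.range c.mulVecLin = LinearMap.range y.mulVecLin ⊔ W := by
  classical
  have hfin : finrank K (Fin n → K) = n := Module.finrank_fin_fun K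
  have hrn : y.rank + finrank K (LinearMap.ker y.mulVecLin) = n := by
    have := LinearMap.finrank_range_add_finrank_ker y.mulVecLin
    rw [hfin] at this
    rw [P5rank_def]
    exact this
  set Ky := LinearMap.ker y.mulVecLin with hKy
  obtain ⟨P, hPc⟩ := Submodule.exists_isCompl Ky
  have hPdim : finrank K P = y.rank := by
    have h1 := Submodule.finrank_add_eq_of_isCompl hPc
    rw [hfin] at h1; omega
  obtain ⟨SS, hSSle, hSSdim⟩ := P5exists_le_finrank Ky (s - y.rank) (by omega)
  obtain ⟨T, hTle, hTdisjSS, hTsup, hTdim⟩ := P5exists_compl_within Ky SS hSSle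
  obtain ⟨T'', hT''le, hT''dim⟩ := P5exists_le_finrank T (s - y.rank) (by omega)
  obtain ⟨g, hgrange, hgzero⟩ := P5helperA Ky P T'' hPc (by omega)
  have hSPT : IsCompl SS (P ⊔ T) := by
    refine ⟨?_, ?_⟩
    · rw [Submodule.disjoint_def]
      intro v hvSS hvPT
      obtain ⟨p, hp, t', ht', hpt⟩ := Submodule.mem_sup.mp hvPT
      have hpKy : p ∈ Ky := by
        have : p = v - t' := by rw [← hpt]; ring
        rw [this]
        exact Submodule.sub_mem _ (hSSle hvSS) (hTle ht')
      have hp0 : p = 0 := Submodule.disjoint_def.mp hPc.disjoint p hpKy hp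
      have hvT : v = t' := by rw [← hpt, hp0, zero_add]
      exact Submodule.disjoint_def.mp hTdisjSS.symm v hvSS (hvT ▸ ht')
    · rw [codisjoint_iff_le_sup]
      intro v _
      have hv : v ∈ Ky ⊔ P := by rw [hPc.sup_eq_top]; trivial
      obtain ⟨k, hk, p, hp, rfl⟩ := Submodule.mem_sup.mp hv
      have hk2 : k ∈ T ⊔ SS := by rw [hTsup]; exact hk
      obtain ⟨t', ht', ss, hss, rfl⟩ := Submodule.mem_sup.mp hk2
      have : t' + ss + p = ss + (p + t') := by ring
      rw [this]
      exact Submodule.add_mem_sup hss (Submodule.add_mem_sup hp ht')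
  obtain ⟨w, hwrange, hwzero⟩ := P5helperA SS (P ⊔ T) W hSPT (by omega)
  set dL := P5pE P Ky hPc.symm + g with hdL
  set cL := y.mulVecLin ∘ₗ P5pE P Ky hPc.symm + w with hcL
  have hgP : ∀ v, g (P5pE P Ky hPc.symm v) = 0 := fun v => hgzero _ (P5pE_mem hPc.symm v)
  have hwP : ∀ v, v ∈ P → w v = 0 := fun v hv => hwzero _ (Submodule.mem_sup_left hv)
  have hwT : ∀ v, v ∈ T → w v = 0 := fun v hv => hwzero _ (Submodule.mem_sup_right hv)
  have hydL : ∀ v, y.mulVecLin (P5pE P Ky hPc.symm v) = y.mulVecLin v := by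
    intro v
    have h1 : y.mulVecLin (v - P5pE P Ky hPc.symm v) = 0 := P5pE_sub_mem hPc.symm v
    rw [map_sub, sub_eq_zero] at h1
    exact h1.symm
  have hgT : ∀ v, g v ∈ T := fun v => hT''le (hgrange ▸ ⟨v, rfl⟩)
  have hgKy : ∀ v, g v ∈ Ky := fun v => hTle (hgT v)
  have hcgv : ∀ v, cL (g v) = 0 := by
    intro v
    have h0 : cL (g v) = y.mulVecLin (P5pE P Ky hPc.symm (g v)) + w (g v) := rfl
    rw [h0, P5pE_right hPc.symm (hgKy v), map_zero, hwT _ (hgT v), add_zero]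
  have hcpE : ∀ v, cL (P5pE P Ky hPc.symm v) = y.mulVecLin v := by
    intro v
    have h0 : cL (P5pE P Ky hPc.symm v) =
        y.mulVecLin (P5pE P Ky hPc.symm (P5pE P Ky hPc.symm v)) + w (P5pE P Ky hPc.symm v) := rfl
    rw [h0, show (P5pE P Ky hPc.symm) (P5pE P Ky hPc.symm v) = P5pE P Ky hPc.symm v from
      P5pE_idem hPc.symm v, hydL, hwP _ (P5pE_mem hPc.symm v), add_zero]
  have hcomp : cL ∘ₗ dL = y.mulVecLin := by
    apply LinearMap.ext; intro v
    have h0 : (cL ∘ₗ dL) v = cL (P5pE P Ky hPc.symm v + g v) := rfl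
    rw [h0, map_add, hcpE, hcgv, add_zero]
  have hdrange : LinearMap.range dL = P ⊔ T'' := by
    apply le_antisymm
    · rintro _ ⟨v, rfl⟩
      exact Submodule.add_mem_sup (P5pE_mem hPc.symm v) (hgrange ▸ ⟨v, rfl⟩)
    · apply sup_le
      · intro p hp
        refine ⟨p, ?_⟩
        have h0 : dL p = P5pE P Ky hPc.symm p + g p := rfl
        rw [h0, P5pE_left hPc.symm hp, hgzero _ hp, add_zero]
      · rw [← hgrange]
        rintro _ ⟨v, rfl⟩
        refine ⟨v - P5pE P Ky hPc.symm v, ?_⟩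
        have hk : v - P5pE P Ky hPc.symm v ∈ Ky := P5pE_sub_mem hPc.symm v
        have h0 : dL (v - P5pE P Ky hPc.symm v) =
            P5pE P Ky hPc.symm (v - P5pE P Ky hPc.symm v) + g (v - P5pE P Ky hPc.symm v) := rfl
        rw [h0, P5pE_right hPc.symm hk, map_sub, hgP, sub_zero, zero_add]
  have hdrank : finrank K (LinearMap.range dL) = s := by
    have hdisjPT'' : Disjoint P T'' := by
      rw [Submodule.disjoint_def]
      intro v hvP hvT''
      exact Submodule.disjoint_def.mp hPc.disjoint.symm v hvP (hTle (hT''le hvT''))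
    rw [hdrange, P5finrank_sup_of_disjoint hdisjPT'']
    omega
  have hcrange : LinearMap.range cL = LinearMap.range y.mulVecLin ⊔ W := by
    apply le_antisymm
    · rintro _ ⟨v, rfl⟩
      have h0 : cL v = y.mulVecLin (P5pE P Ky hPc.symm v) + w v := rfl
      rw [h0]
      exact Submodule.add_mem_sup ⟨_, rfl⟩ (hwrange ▸ ⟨v, rfl⟩)
    · apply sup_le
      · rintro _ ⟨v, rfl⟩
        exact ⟨P5pE P Ky hPc.symm v, hcpE v⟩
      · rw [← hwrange]
        rintro _ ⟨v, rfl⟩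
        have hv : v ∈ SS ⊔ (P ⊔ T) := by rw [hSPT.sup_eq_top]; trivial
        obtain ⟨ss, hss, z, hz, rfl⟩ := Submodule.mem_sup.mp hv
        refine ⟨ss, ?_⟩
        have h0 : cL ss = y.mulVecLin (P5pE P Ky hPc.symm ss) + w ss := rfl
        rw [h0, P5pE_right hPc.symm (hSSle hss), map_zero, zero_add,
          show w (ss + z) = w ss + w z from map_add w ss z, hwzero _ hz, add_zero]
  have hcrank : finrank K (LinearMap.range cL) = s := by
    rw [hcrange, P5finrank_sup_of_disjoint hWdisj.symm, ← P5rank_def]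
    omega
  refine ⟨LinearMap.toMatrix' cL, LinearMap.toMatrix' dL, ?_, ?_, ?_, ?_⟩
  · rw [P5rank_toMatrix', hcrank]
  · rw [P5rank_toMatrix', hdrank]
  · rw [← LinearMap.toMatrix'_comp, hcomp, P5toMatrix'_mulVecLin]
  · rw [P5mulVecLin_toMatrix', hcrange]

end Fact
section Main
variable {K : Type*} [Field K] {n s : ℕ}

private lemma P5delta_zero (hs1 : 1 ≤ s) (hsn : 2*s ≤ n)
    (δ : Matrix (Fin n) (Fin n) K → Matrix (Fin n) (Fin n) K)
    (hδ : ∀ x y : Matrix (Fin n) (Fin n) K,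
      x.rank = s → y.rank = s → δ (x * y) = δ x * y + x * δ y) :
    δ 0 = 0 := by
  classical
  have hfin : finrank K (Fin n → K) = n := Module.finrank_fin_fun K
  have key : ∀ (Wu : Submodule K (Fin n → K)), finrank K Wu = s →
      ∀ wv : Fin n → K, wv ≠ 0 → Matrix.mulVec (δ 0) wv ∈ Wu := by
    intro Wu hWu wv hwv
    have hsp1 : finrank K (Submodule.span K {wv}) = 1 := finrank_span_singleton hwv
    obtain ⟨F, -, hFdisj, hFdim⟩ := P5exists_disjoint_le (⊤ : Submodule K (Fin n → K))
      (Submodule.span K {wv}) le_top (s - 1) (by rw [finrank_top, hfin, hsp1]; omega)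
    set Q := Submodule.span K {wv} ⊔ F with hQ
    have hQdim : finrank K Q = s := by
      rw [hQ, P5finrank_sup_of_disjoint hFdisj.symm, hsp1, hFdim]; omega
    have hwvQ : wv ∈ Q := Submodule.mem_sup_left (Submodule.mem_span_singleton_self wv)
    obtain ⟨Z, hZc⟩ := Submodule.exists_isCompl Q
    have hZdim : finrank K Q + finrank K Z = n := by
      have := Submodule.finrank_add_eq_of_isCompl hZc; rw [hfin] at this; omega
    obtain ⟨P, hPle, hPdim⟩ := P5exists_le_finrank Z s (by omega)
    obtain ⟨R, hRle, hRdisjP, hRsup, hRdim⟩ := P5exists_compl_within Z P hPle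
    have hPQR : IsCompl P (Q ⊔ R) := by
      refine ⟨?_, ?_⟩
      · rw [Submodule.disjoint_def]
        intro v hvP hvQR
        obtain ⟨q, hq, r, hr, hqr⟩ := Submodule.mem_sup.mp hvQR
        have hqZ : q ∈ Z := by
          have hq2 : q = v - r := by rw [← hqr]; ring
          rw [hq2]; exact Submodule.sub_mem _ (hPle hvP) (hRle hr)
        have hq0 : q = 0 := Submodule.disjoint_def.mp hZc.disjoint q hq hqZ
        have hvr : v = r := by rw [← hqr, hq0, zero_add]
        exact Submodule.disjoint_def.mp hRdisjP v (hvr ▸ hr) hvP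
      · rw [codisjoint_iff_le_sup]
        intro v _
        have hv : v ∈ Q ⊔ Z := by rw [hZc.sup_eq_top]; trivial
        obtain ⟨q, hq, z, hz, rfl⟩ := Submodule.mem_sup.mp hv
        have hz2 : z ∈ R ⊔ P := by rw [hRsup]; exact hz
        obtain ⟨r, hr, p, hp, rfl⟩ := Submodule.mem_sup.mp hz2
        have heq : q + (r + p) = p + (q + r) := by ring
        rw [heq]
        exact Submodule.add_mem_sup hp (Submodule.add_mem_sup hq hr)
    have hQRdim : finrank K ↥(Q ⊔ R) = s + finrank K R := by
      have hdisjQR : Disjoint Q R := by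
        rw [Submodule.disjoint_def]
        intro v hvQ hvR
        exact Submodule.disjoint_def.mp hZc.disjoint v hvQ (hRle hvR)
      rw [P5finrank_sup_of_disjoint hdisjQR, hQdim]
    obtain ⟨u, hurange, huzero⟩ := P5helperA (Q ⊔ R) P Wu hPQR.symm (by omega)
    set pL := P5pE P (Q ⊔ R) hPQR with hpL
    set qL := P5pE Q Z hZc with hqL
    set U := LinearMap.toMatrix' u with hU
    set Pm := LinearMap.toMatrix' pL with hPm
    set Qm := LinearMap.toMatrix' qL with hQm
    have hrankU : U.rank = s := by rw [hU, P5rank_toMatrix', hurange, hWu]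
    have hrankP : Pm.rank = s := by
      rw [hPm, P5rank_toMatrix', show LinearMap.range pL = P from P5pE_range hPQR, hPdim]
    have hUP0 : U * Pm = 0 := by
      rw [hU, hPm, ← LinearMap.toMatrix'_comp]
      have : u ∘ₗ pL = 0 := by
        apply LinearMap.ext; intro v
        exact huzero _ (P5pE_mem hPQR v)
      rw [this]; simp
    have hPQ0 : Pm * Qm = 0 := by
      rw [hPm, hQm, ← LinearMap.toMatrix'_comp]
      have : pL ∘ₗ qL = 0 := by
        apply LinearMap.ext; intro v
        exact P5pE_right hPQR (Submodule.mem_sup_left (P5pE_mem hZc v))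
      rw [this]; simp
    have hz1 : δ 0 = δ U * Pm + U * δ Pm := by
      have := hδ U Pm hrankU hrankP
      rwa [hUP0] at this
    have hz2 : δ 0 * Qm = U * (δ Pm * Qm) := by
      rw [hz1, add_mul, mul_assoc (δ U), hPQ0, mul_zero, zero_add, mul_assoc]
    have hqwv : Matrix.mulVec Qm wv = wv := by
      have : Qm.mulVec wv = qL wv := by
        rw [hQm, ← Matrix.mulVecLin_apply, P5mulVecLin_toMatrix']
      rw [this, hqL]
      exact P5pE_left hZc hwvQ
    have hfinal : Matrix.mulVec (δ 0) wv = u ((δ Pm * Qm).mulVec wv) := by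
      conv_lhs => rw [← hqwv]
      rw [Matrix.mulVec_mulVec, hz2, ← Matrix.mulVec_mulVec, hU, ← Matrix.mulVecLin_apply,
        P5mulVecLin_toMatrix']
    rw [hfinal, ← hurange]
    exact ⟨_, rfl⟩
  apply P5matrix_eq_zero
  apply LinearMap.ext; intro wv
  simp only [Matrix.mulVecLin_apply, LinearMap.zero_apply]
  by_cases hwv : wv = 0
  · rw [hwv, Matrix.mulVec_zero]
  · obtain ⟨W1, -, hW1⟩ := P5exists_le_finrank (⊤ : Submodule K (Fin n → K)) s
      (by rw [finrank_top, hfin]; omega)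
    obtain ⟨W2, -, hW2disj, hW2⟩ := P5exists_disjoint_le (⊤ : Submodule K (Fin n → K)) W1
      le_top s (by rw [finrank_top, hfin, hW1]; omega)
    have m1 := key W1 hW1 wv hwv
    have m2 := key W2 hW2 wv hwv
    exact Submodule.disjoint_def.mp hW2disj _ m2 m1

private lemma P5F2 (hsn : 2*s ≤ n)
    (δ : Matrix (Fin n) (Fin n) K → Matrix (Fin n) (Fin n) K)
    (hδ : ∀ x y : Matrix (Fin n) (Fin n) K,
      x.rank = s → y.rank = s → δ (x * y) = δ x * y + x * δ y)
    (x b : Matrix (Fin n) (Fin n) K) (hx : x.rank ≤ s) (hb : b.rank = s)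
    (hxb : (x * b).rank = x.rank) :
    δ (x * b) = δ x * b + x * δ b := by
  classical
  have hfin : finrank K (Fin n → K) = n := Module.finrank_fin_fun K
  have hkerx : x.rank + finrank K (LinearMap.ker x.mulVecLin) = n := by
    have := LinearMap.finrank_range_add_finrank_ker x.mulVecLin
    rw [hfin] at this; rw [P5rank_def]; exact this
  have hD : x.rank + finrank K ↥(LinearMap.range b.mulVecLin ⊓ LinearMap.ker x.mulVecLin)
      = s := by
    have h1 := P5finrank_map_add x.mulVecLin (LinearMap.range b.mulVecLin)
    have h2 : (LinearMap.range b.mulVecLin).map x.mulVecLin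
        = LinearMap.range (x*b).mulVecLin := by
      rw [Matrix.mulVecLin_mul, LinearMap.range_comp]
    rw [h2, ← P5rank_def, ← P5rank_def, hxb, hb] at h1
    exact h1
  obtain ⟨Kd, hKdle, hKddisj, hKddim⟩ := P5exists_disjoint_le (LinearMap.ker x.mulVecLin)
    (LinearMap.range b.mulVecLin ⊓ LinearMap.ker x.mulVecLin) inf_le_right (n - s)
    (by omega)
  obtain ⟨c, d, hc, hd, hcd, hkerd⟩ := P5factKer s hsn x hx Kd hKdle (by omega)
  have hdb : (d * b).rank = s := by
    have h1 := P5finrank_map_add d.mulVecLin (LinearMap.range b.mulVecLin)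
    have h2 : (LinearMap.range b.mulVecLin).map d.mulVecLin
        = LinearMap.range (d*b).mulVecLin := by
      rw [Matrix.mulVecLin_mul, LinearMap.range_comp]
    have h3 : LinearMap.range b.mulVecLin ⊓ LinearMap.ker d.mulVecLin = ⊥ := by
      rw [hkerd, eq_bot_iff]
      intro v hv
      have hvD : v ∈ LinearMap.range b.mulVecLin ⊓ LinearMap.ker x.mulVecLin :=
        ⟨hv.1, hKdle hv.2⟩
      exact (Submodule.mem_bot K).mpr (Submodule.disjoint_def.mp hKddisj v hv.2 hvD)
    rw [h2, h3, finrank_bot, add_zero, ← P5rank_def, ← P5rank_def, hb] at h1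
    exact h1
  have e1 := hδ c (d * b) hc hdb
  have e2 := hδ d b hd hb
  have e3 : δ x = δ c * d + c * δ d := by rw [← hcd]; exact hδ c d hc hd
  have hassoc : x * b = c * (d * b) := by rw [← mul_assoc, hcd]
  rw [hassoc, e1, e2, e3, ← hcd]
  noncomm_ring

private lemma P5oneSided (hn : 2 ≤ n) (hs1 : 1 ≤ s) (hsn : 2*s ≤ n)
    (δ : Matrix (Fin n) (Fin n) K → Matrix (Fin n) (Fin n) K)
    (hδ : ∀ x y : Matrix (Fin n) (Fin n) K,
      x.rank = s → y.rank = s → δ (x * y) = δ x * y + x * δ y) :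
    ∀ x y : Matrix (Fin n) (Fin n) K, x.rank ≤ 1 → y.rank ≤ s →
      δ (x * y) = δ x * y + x * δ y := by
  classical
  intro x y hx hy
  have hfin : finrank K (Fin n → K) = n := Module.finrank_fin_fun K
  have hδ0 : δ 0 = 0 := P5delta_zero hs1 hsn δ hδ
  by_cases hx0 : x = 0
  · subst hx0
    rw [zero_mul, hδ0, zero_mul, zero_mul, add_zero]
  by_cases hy0 : y = 0
  · subst hy0
    rw [mul_zero, hδ0, mul_zero, mul_zero, add_zero]
  have hx1 : x.rank = 1 := by
    have : x.rank ≠ 0 := fun h => hx0 ((P5rank_zero_iff x).mp h)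
    omega
  have hy1 : 1 ≤ y.rank := by
    have : y.rank ≠ 0 := fun h => hy0 ((P5rank_zero_iff y).mp h)
    omega
  have hm1 : (x * y).rank ≤ 1 := (Matrix.rank_mul_le_left x y).trans (le_of_eq hx1)
  have hkerx : x.rank + finrank K (LinearMap.ker x.mulVecLin) = n := by
    have := LinearMap.finrank_range_add_finrank_ker x.mulVecLin
    rw [hfin] at this; rw [P5rank_def]; exact this
  have hDyx : (x * y).rank
      + finrank K ↥(LinearMap.range y.mulVecLin ⊓ LinearMap.ker x.mulVecLin) = y.rank := by
    have h1 := P5finrank_map_add x.mulVecLin (LinearMap.range y.mulVecLin)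
    have h2 : (LinearMap.range y.mulVecLin).map x.mulVecLin
        = LinearMap.range (x*y).mulVecLin := by
      rw [Matrix.mulVecLin_mul, LinearMap.range_comp]
    rw [h2, ← P5rank_def, ← P5rank_def] at h1
    exact h1
  obtain ⟨W, hWle, hWdisj, hWdim⟩ := P5exists_disjoint_le (LinearMap.ker x.mulVecLin)
    (LinearMap.range y.mulVecLin ⊓ LinearMap.ker x.mulVecLin) inf_le_right (s - y.rank)
    (by omega)
  have hWdisjY : Disjoint W (LinearMap.range y.mulVecLin) := by
    rw [Submodule.disjoint_def]
    intro v hvW hvY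
    exact Submodule.disjoint_def.mp hWdisj v hvW ⟨hvY, hWle hvW⟩
  obtain ⟨c, d, hc, hd, hcd, hcrange⟩ := P5factIm s hsn y hy W hWdisjY (by omega)
  have hmapW : W.map x.mulVecLin = ⊥ := by
    rw [eq_bot_iff]
    rintro _ ⟨v, hv, rfl⟩
    exact (Submodule.mem_bot K).mpr (hWle hv)
  have hxc_range : LinearMap.range (x*c).mulVecLin = LinearMap.range (x*y).mulVecLin := by
    rw [Matrix.mulVecLin_mul, LinearMap.range_comp, hcrange, Submodule.map_sup, hmapW,
      sup_bot_eq, Matrix.mulVecLin_mul, LinearMap.range_comp]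
  have hxc_rank : (x*c).rank = (x*y).rank := by
    rw [P5rank_def, P5rank_def, hxc_range]
  have h3 : δ y = δ c * d + c * δ d := by rw [← hcd]; exact hδ c d hc hd
  rcases Nat.le_one_iff_eq_zero_or_eq_one.mp hm1 with hm | hm
  · -- x*y = 0 case
    have hxy0 : x * y = 0 := (P5rank_zero_iff _).mp hm
    have hxc0 : x * c = 0 := (P5rank_zero_iff _).mp (by rw [hxc_rank, hm])
    have hrc : LinearMap.range c.mulVecLin ≤ LinearMap.ker x.mulVecLin := by
      rw [hcrange]
      apply sup_le
      · rintro _ ⟨v, rfl⟩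
        rw [LinearMap.mem_ker]
        have : x.mulVecLin (y.mulVecLin v) = (x*y).mulVecLin v := by
          rw [Matrix.mulVecLin_mul]; rfl
        rw [this, hxy0]
        simp
      · exact hWle
    have hrcdim : finrank K (LinearMap.range c.mulVecLin) = s := by
      rw [← P5rank_def, hc]
    obtain ⟨G, hGle, hGdisj, hGdim⟩ := P5exists_disjoint_le (LinearMap.ker x.mulVecLin)
      (LinearMap.range c.mulVecLin) hrc (n - 2*s) (by omega)
    obtain ⟨a, b, ha, hb, hab, hkerb⟩ := P5factKer s hsn x (by omega)
      (LinearMap.range c.mulVecLin ⊔ G) (sup_le hrc hGle)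
      (by rw [P5finrank_sup_of_disjoint hGdisj.symm, hrcdim]; omega)
    have hbc0 : b * c = 0 := by
      apply P5matrix_eq_zero
      apply LinearMap.ext; intro v
      have h4 : (b*c).mulVecLin v = b.mulVecLin (c.mulVecLin v) := by
        rw [Matrix.mulVecLin_mul]; rfl
      rw [h4]
      have h5 : c.mulVecLin v ∈ LinearMap.ker b.mulVecLin := by
        rw [hkerb]
        exact Submodule.mem_sup_left ⟨v, rfl⟩
      simpa using h5
    have e1 : δ x = δ a * b + a * δ b := by rw [← hab]; exact hδ a b ha hb
    have e2 : (0 : Matrix (Fin n) (Fin n) K) = δ b * c + b * δ c := by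
      have := hδ b c hb hc
      rwa [hbc0, hδ0] at this
    have hE : δ x * c + x * δ c = 0 := by
      have h6 : δ x * c + x * δ c = δ a * (b * c) + a * (δ b * c + b * δ c) := by
        rw [e1, ← hab]; noncomm_ring
      rw [h6, hbc0, mul_zero, ← e2, mul_zero, add_zero]
    have h7 : δ x * y + x * δ y = (δ x * c + x * δ c) * d + (x * c) * δ d := by
      rw [h3, ← hcd]; noncomm_ring
    rw [hxy0, hδ0, h7, hE, hxc0, zero_mul, zero_mul, add_zero]
  · -- x*y rank 1 case
    have hf1 : δ (x * c) = δ x * c + x * δ c :=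
      P5F2 hsn δ hδ x c (by omega) hc (by rw [hxc_rank, hm, hx1])
    have hassoc : x * c * d = x * y := by rw [mul_assoc, hcd]
    have hf2 : δ (x * c * d) = δ (x * c) * d + (x * c) * δ d :=
      P5F2 hsn δ hδ (x * c) d (by omega) hd (by rw [hassoc, hm, hxc_rank, hm])
    calc δ (x * y) = δ (x * c * d) := by rw [hassoc]
      _ = δ (x * c) * d + (x * c) * δ d := hf2
      _ = (δ x * c + x * δ c) * d + (x * c) * δ d := by rw [hf1]
      _ = δ x * (c * d) + x * (δ c * d + c * δ d) := by noncomm_ring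
      _ = δ x * y + x * δ y := by rw [hcd, ← h3]

end Main

theorem stmt_5 {n s : ℕ} (K : Type*) [Field K]
    (hn : 2 ≤ n) (hs1 : 1 ≤ s) (hs2 : 2 * s ≤ n)
    (δ : Matrix (Fin n) (Fin n) K → Matrix (Fin n) (Fin n) K)
    (hδ : ∀ x y : Matrix (Fin n) (Fin n) K,
      x.rank = s → y.rank = s → δ (x * y) = δ x * y + x * δ y) :
    ∀ x y : Matrix (Fin n) (Fin n) K,
      x.rank ≤ s → y.rank ≤ s → min x.rank y.rank ≤ 1 →
      δ (x * y) = δ x * y + x * δ y := by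
  intro x y hx hy hmin
  rcases le_or_gt x.rank 1 with h1 | h1
  · exact P5oneSided hn hs1 hs2 δ hδ x y h1 hy
  · have h2 : y.rank ≤ 1 := by omega
    set δ' : Matrix (Fin n) (Fin n) K → Matrix (Fin n) (Fin n) K :=
      fun m => (δ mᵀ)ᵀ with hδ'def
    have hδ' : ∀ a b : Matrix (Fin n) (Fin n) K,
        a.rank = s → b.rank = s → δ' (a * b) = δ' a * b + a * δ' b := by
      intro a b ha hb
      have h3 := hδ bᵀ aᵀ (by rwa [Matrix.rank_transpose]) (by rwa [Matrix.rank_transpose])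
      have h4 : (a * b)ᵀ = bᵀ * aᵀ := Matrix.transpose_mul a b
      simp only [hδ'def, h4, h3, Matrix.transpose_add, Matrix.transpose_mul,
        Matrix.transpose_transpose]
      rw [add_comm]
    have h5 := P5oneSided hn hs1 hs2 δ' hδ' yᵀ xᵀ (by rwa [Matrix.rank_transpose])
      (by rwa [Matrix.rank_transpose])
    simp only [hδ'def, ← Matrix.transpose_mul, Matrix.transpose_transpose] at h5
    have h6 := congrArg Matrix.transpose h5
    simp only [Matrix.transpose_add, Matrix.transpose_mul, Matrix.transpose_transpose] at h6
    rw [h6, add_comm]
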